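/- If Φ is false, then no state with status SAT is reachable from the initial state via the transition rules of basic Incremental Determinization. -/

import Mathlib

/-! Basic framework: variables are `X ⊕ Y` where `X` are the universal and
`Y` the existential variables (this makes `X` and `Y` disjoint by construction). -/

/-- A literal: a variable together with a polarity. -/
abbrev Lit (X Y : Type) := (X ⊕ Y) × Bool

/-- A clause is a finite set of literals. -/
abbrev Clause (X Y : Type) := Finset (Lit X Y)

/-- A (total) assignment to all variables. Assignments "to a set `D` of variables"
are modelled as total assignments; all notions below only inspect the relevant variables. -/
abbrev Assn (X Y : Type) := (X ⊕ Y) → Bool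

/-- An assignment satisfies a literal if it maps its variable to its polarity. -/
def satLit {X Y : Type} (σ : Assn X Y) (l : Lit X Y) : Prop := σ l.1 = l.2

/-- An assignment satisfies a clause if it satisfies at least one of its literals. -/
def satClause {X Y : Type} (σ : Assn X Y) (c : Clause X Y) : Prop := ∃ l ∈ c, satLit σ l

/-- An assignment satisfies a clause set if it satisfies every clause in it. -/
def satCnf {X Y : Type} (σ : Assn X Y) (ψ : Set (Clause X Y)) : Prop := ∀ c ∈ ψ, satClause σ c

/-- The combined assignment `(xa, ya)`. -/
def combine {X Y : Type} (xa : X → Bool) (ya : Y → Bool) : Assn X Y := Sum.elim xa ya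

/-- The restriction of an assignment to the universal variables `X`. -/
def restrX {X Y : Type} (σ : Assn X Y) : X → Bool := fun x => σ (Sum.inl x)

/-- Truth of the 2QBF `∀X.∃Y.φ`: there is a Skolem function `f` such that for every
assignment `xa` to `X` the combined assignment `(xa, f(xa))` satisfies `φ`. -/
def qbfTrue {X Y : Type} (φ : Set (Clause X Y)) : Prop :=
  ∃ f : (X → Bool) → (Y → Bool), ∀ xa : X → Bool, satCnf (combine xa (f xa)) φ

/-- `v` has a unique Skolem function for domain `χ` in `ψ`: for every assignment `xa` to `X`
satisfying `χ` there is exactly one Boolean `b` such that some assignment `ya` to the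
existential variables with `ya v = b` makes `(xa, ya)` satisfy `ψ`. -/
def uniqueSkolem {X Y : Type} (ψ : Set (Clause X Y)) (χ : (X → Bool) → Prop) (v : Y) : Prop :=
  ∀ xa : X → Bool, χ xa →
    ∃! b : Bool, ∃ ya : Y → Bool, ya v = b ∧ satCnf (combine xa ya) ψ

/-- `C|_D`: the clauses of `C` all of whose variables lie in `D`. -/
def restrictC {X Y : Type} (C : Set (Clause X Y)) (D : Set (X ⊕ Y)) : Set (Clause X Y) :=
  {c ∈ C | ∀ l ∈ c, l.1 ∈ D}

/-- Clause `c` has unique consequence `v` relative to `D`: it contains a literal of `v`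
and all its other literals are of variables in `D`. -/
def hasUC {X Y : Type} (c : Clause X Y) (v : Y) (D : Set (X ⊕ Y)) : Prop :=
  (∃ b : Bool, (Sum.inr v, b) ∈ c) ∧ ∀ l ∈ c, l.1 ≠ Sum.inr v → l.1 ∈ D

/-- `U_v`: the clauses of `C` with unique consequence `v` relative to `D`. -/
def UC {X Y : Type} (C : Set (Clause X Y)) (v : Y) (D : Set (X ⊕ Y)) : Set (Clause X Y) :=
  {c ∈ C | hasUC c v D}

/-- `A_(v,b)`: some clause `c` in `U_v` contains the literal `(v, b)` and the assignment
falsifies every literal of `c` other than the literals of `v`. -/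
def Ant {X Y : Type} (C : Set (Clause X Y)) (v : Y) (D : Set (X ⊕ Y)) (b : Bool)
    (σ : Assn X Y) : Prop :=
  ∃ c ∈ UC C v D, (Sum.inr v, b) ∈ c ∧ ∀ l ∈ c, l.1 ≠ Sum.inr v → ¬ satLit σ l

/-- `deterministic(v, C, χ, D)`. -/
def deterministic {X Y : Type} (v : Y) (C : Set (Clause X Y)) (χ : (X → Bool) → Prop)
    (D : Set (X ⊕ Y)) : Prop :=
  ∀ σ : Assn X Y, satCnf σ (restrictC C D) → χ (restrX σ) →
    Ant C v D true σ ∨ Ant C v D false σ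

/-- `unconflicted(v, C, χ, D)`. -/
def unconflicted {X Y : Type} (v : Y) (C : Set (Clause X Y)) (χ : (X → Bool) → Prop)
    (D : Set (X ⊕ Y)) : Prop :=
  ∀ σ : Assn X Y, satCnf σ (restrictC C D) → χ (restrX σ) →
    ¬ (Ant C v D true σ ∧ Ant C v D false σ)

/-- `v` has a unique Skolem function relative to `D` for domain `χ` in `C`: for every
assignment to `D` satisfying `C|_D` whose restriction to `X` satisfies `χ`, there is exactly
one Boolean `b` such that extending the assignment by `v ↦ b` satisfies every clause of `U_v`. -/
def uniqueSkolemRel {X Y : Type} [DecidableEq X] [DecidableEq Y] (v : Y)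
    (C : Set (Clause X Y)) (χ : (X → Bool) → Prop) (D : Set (X ⊕ Y)) : Prop :=
  ∀ σ : Assn X Y, satCnf σ (restrictC C D) → χ (restrX σ) →
    ∃! b : Bool, satCnf (Function.update σ (Sum.inr v) b) (UC C v D)

/-! The state of the Incremental Determinization solver. -/

/-- The solver status. -/
inductive Status (X Y : Type) where
  | ready : Status X Y
  | conflict (L : Clause X Y) (d : Assn X Y) : Status X Y
  | sat : Status X Y
  | unsat : Status X Y

/-- A solver state `(S, C, D, χ, α)`: a status, a stack of clause sets, a stack of sets of
variables, and two predicates on assignments to `X`. -/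
structure IDState (X Y : Type) where
  status : Status X Y
  C : List (Set (Clause X Y))
  D : List (Set (X ⊕ Y))
  chi : (X → Bool) → Prop
  alpha : (X → Bool) → Prop

/-- The union of the elements of a stack of sets. -/
def stackUnion {β : Type} (S : List (Set β)) : Set β := {x | ∃ s ∈ S, x ∈ s}

/-- The first element (index 0) of a stack of sets. -/
def first {β : Type} (S : List (Set β)) : Set β := S.getD 0 ∅

/-- Add an element to the last set of a stack. -/
def addLast {β : Type} : List (Set β) → β → List (Set β)
  | [], v => [{v}]
  | [s], v => [insert v s]
  | s :: t :: rest, v => s :: addLast (t :: rest) v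

/-- Add an element to the first set of a stack. -/
def addFirst {β : Type} : List (Set β) → β → List (Set β)
  | [], x => [{x}]
  | s :: rest, x => insert x s :: rest

/-- The initial state `(Ready, ⟨φ⟩, ⟨X⟩, ⊤, ⊤)`. -/
def initState {X Y : Type} (φ : Set (Clause X Y)) : IDState X Y :=
  ⟨Status.ready, [φ], [Set.range Sum.inl], fun _ => True, fun _ => True⟩

/-- The transition rules of basic Incremental Determinization. -/
inductive Step {X Y : Type} [DecidableEq X] [DecidableEq Y] :
    IDState X Y → IDState X Y → Prop

  | propagate (C : List (Set (Clause X Y))) (D : List (Set (X ⊕ Y)))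
      (χ α : (X → Bool) → Prop) (v : Y)
      (hv : Sum.inr v ∉ stackUnion D)
      (hdet : deterministic v (stackUnion C) (fun xa => χ xa ∧ α xa) (stackUnion D))
      (hunc : unconflicted v (stackUnion C) (fun xa => χ xa ∧ α xa) (stackUnion D)) :
      Step ⟨Status.ready, C, D, χ, α⟩ ⟨Status.ready, C, addLast D (Sum.inr v), χ, α⟩
  | decide (C : List (Set (Clause X Y))) (D : List (Set (X ⊕ Y)))
      (χ α : (X → Bool) → Prop) (v : Y) (δ : Set (Clause X Y))
      (hv : Sum.inr v ∉ stackUnion D) (hδfin : δ.Finite)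
      (hδ : ∀ c ∈ δ, hasUC c v (stackUnion D)) :
      Step ⟨Status.ready, C, D, χ, α⟩ ⟨Status.ready, C ++ [δ], D ++ [∅], χ, α⟩
  | sat (C : List (Set (Clause X Y))) (D : List (Set (X ⊕ Y)))
      (χ : (X → Bool) → Prop)
      (hD : stackUnion D = Set.univ) :
      Step ⟨Status.ready, C, D, χ, fun _ => True⟩ ⟨Status.sat, C, D, χ, fun _ => True⟩
  | conflict (C : List (Set (Clause X Y))) (D : List (Set (X ⊕ Y)))
      (χ α : (X → Bool) → Prop) (v : Y) (σ : Assn X Y)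
      (hv : Sum.inr v ∉ stackUnion D)
      (hsat : satCnf σ (restrictC (stackUnion C) (stackUnion D)))
      (hχ : χ (restrX σ)) (hα : α (restrX σ))
      (ht : Ant (stackUnion C) v (stackUnion D) true σ)
      (hf : Ant (stackUnion C) v (stackUnion D) false σ) :
      Step ⟨Status.ready, C, D, χ, α⟩
        ⟨Status.conflict {(Sum.inr v, true), (Sum.inr v, false)} σ, C, D, χ, α⟩
  | analyze (C : List (Set (Clause X Y))) (D : List (Set (X ⊕ Y)))
      (χ α : (X → Bool) → Prop) (L : Clause X Y) (σ : Assn X Y)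
      (c : Clause X Y) (l : Lit X Y)
      (hc : c ∈ first C) (hl : l ∈ L) (hlc : (l.1, !l.2) ∈ c) :
      Step ⟨Status.conflict L σ, C, D, χ, α⟩
        ⟨Status.conflict (L.erase l ∪ c.erase (l.1, !l.2)) σ, C, D, χ, α⟩
  | learn (C : List (Set (Clause X Y))) (D : List (Set (X ⊕ Y)))
      (χ α : (X → Bool) → Prop) (L : Clause X Y) (σ : Assn X Y)
      (h : ∃ l ∈ L, l.1 ∉ stackUnion D) :
      Step ⟨Status.conflict L σ, C, D, χ, α⟩ ⟨Status.ready, addFirst C L, D, χ, α⟩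
  | unsat (C : List (Set (Clause X Y))) (D : List (Set (X ⊕ Y)))
      (χ α : (X → Bool) → Prop) (L : Clause X Y) (σ : Assn X Y)
      (hvars : ∀ l ∈ L, l.1 ∈ first D)
      (hfals : ∀ l ∈ L, ¬ satLit σ l) :
      Step ⟨Status.conflict L σ, C, D, χ, α⟩ ⟨Status.unsat, C, D, χ, α⟩
  | backtrack (S : Status X Y) (C : List (Set (Clause X Y))) (D : List (Set (X ⊕ Y)))
      (χ α : (X → Bool) → Prop) (k : ℕ) (h0 : 0 < k) (hk : k ≤ C.length) :
      Step ⟨S, C, D, χ, α⟩ ⟨S, C.take k, D.take k, χ, α⟩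

/-- Reachability from the initial state via the basic ID rules. -/
def Reachable {X Y : Type} [DecidableEq X] [DecidableEq Y] (φ : Set (Clause X Y))
    (s : IDState X Y) : Prop :=
  Relation.ReflTransGen Step (initState φ) s

/-! ### Auxiliary lemmas for the soundness proof -/

lemma stackUnion_nil {β : Type} : stackUnion ([] : List (Set β)) = ∅ := by
  ext x; simp [stackUnion]

lemma stackUnion_cons {β : Type} (s : Set β) (t : List (Set β)) :
    stackUnion (s :: t) = s ∪ stackUnion t := by
  ext x
  simp only [stackUnion, Set.mem_setOf_eq, List.mem_cons, Set.mem_union]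
  aesop

lemma stackUnion_append {β : Type} (A B : List (Set β)) :
    stackUnion (A ++ B) = stackUnion A ∪ stackUnion B := by
  ext x
  simp only [stackUnion, Set.mem_setOf_eq, List.mem_append, Set.mem_union]
  aesop

lemma stackUnion_addLast {β : Type} :
    ∀ (D : List (Set β)) (x : β), stackUnion (addLast D x) = insert x (stackUnion D)
  | [], x => by
      simp [addLast, stackUnion_cons, stackUnion_nil]
  | [s], x => by
      simp [addLast, stackUnion_cons, stackUnion_nil]
  | s :: t :: rest, x => by
      simp only [addLast, stackUnion_cons, stackUnion_addLast (t :: rest) x]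
      rw [Set.union_insert]

lemma stackUnion_addFirst {β : Type} :
    ∀ (C : List (Set β)) (x : β), stackUnion (addFirst C x) = insert x (stackUnion C)
  | [], x => by simp [addFirst, stackUnion_cons, stackUnion_nil]
  | s :: rest, x => by
      simp only [addFirst, stackUnion_cons]
      rw [Set.insert_union]

lemma stackUnion_take_subset {β : Type} (L : List (Set β)) (k : ℕ) :
    stackUnion (L.take k) ⊆ stackUnion L := by
  intro x hx
  obtain ⟨s, hs, hxs⟩ := hx
  exact ⟨s, List.take_subset k L hs, hxs⟩

lemma first_take {β : Type} (L : List (Set β)) (k : ℕ) (hk : 0 < k) :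
    first (L.take k) = first L := by
  cases L with
  | nil => simp
  | cons a l =>
    cases k with
    | zero => omega
    | succ n => simp [first, List.take_succ_cons]

lemma first_append {β : Type} (L M : List (Set β)) (h : L ≠ []) :
    first (L ++ M) = first L := by
  cases L with
  | nil => exact absurd rfl h
  | cons a l => simp [first]

lemma first_addFirst {β : Type} (L : List (Set β)) (x : β) :
    first (addFirst L x) = insert x (first L) := by
  cases L with
  | nil => simp [addFirst, first]
  | cons a l => simp [addFirst, first]

lemma first_subset_stackUnion {β : Type} (L : List (Set β)) (h : L ≠ []) :
    first L ⊆ stackUnion L := by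
  cases L with
  | nil => exact absurd rfl h
  | cons a l =>
    intro x hx
    exact ⟨a, List.mem_cons_self, by simpa [first] using hx⟩

lemma restrictC_mono {X Y : Type} {C₁ C₂ : Set (Clause X Y)} {D₁ D₂ : Set (X ⊕ Y)}
    (hC : C₁ ⊆ C₂) (hD : D₁ ⊆ D₂) : restrictC C₁ D₁ ⊆ restrictC C₂ D₂ := by
  rintro c ⟨hc, hv⟩
  exact ⟨hC hc, fun l hl => hD (hv l hl)⟩

lemma satCnf_mono {X Y : Type} {σ : Assn X Y} {A B : Set (Clause X Y)}
    (h : A ⊆ B) (hB : satCnf σ B) : satCnf σ A :=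
  fun c hc => hB c (h hc)

/-- The invariant maintained by basic ID. -/
def IDInv {X Y : Type} (φ : Set (Clause X Y)) (s : IDState X Y) : Prop :=
  s.C ≠ [] ∧ φ ⊆ first s.C ∧ (∀ xa, s.chi xa) ∧ (∀ xa, s.alpha xa) ∧
  s.status ≠ Status.sat ∧
  ∀ xa : X → Bool, ∃ σ : Assn X Y, restrX σ = xa ∧
    satCnf σ (restrictC (stackUnion s.C) (stackUnion s.D))

lemma restrX_update {X Y : Type} [DecidableEq X] [DecidableEq Y]
    (σ : Assn X Y) (v : Y) (b : Bool) :
    restrX (Function.update σ (Sum.inr v) b) = restrX σ := by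
  funext x
  exact Function.update_of_ne (by simp) _ _

lemma satLit_update {X Y : Type} [DecidableEq X] [DecidableEq Y]
    (σ : Assn X Y) (v : Y) (b : Bool) (l : Lit X Y) (hl : l.1 ≠ Sum.inr v) :
    satLit (Function.update σ (Sum.inr v) b) l ↔ satLit σ l := by
  unfold satLit
  rw [Function.update_of_ne hl]

/-- Key lemma for the Propagate rule. -/
lemma propagate_key {X Y : Type} [DecidableEq X] [DecidableEq Y]
    (CU : Set (Clause X Y)) (DU : Set (X ⊕ Y)) (v : Y) (b : Bool) (σ : Assn X Y)
    (hv : Sum.inr v ∉ DU)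
    (hsat : satCnf σ (restrictC CU DU))
    (hnb : ¬ Ant CU v DU (!b) σ) :
    satCnf (Function.update σ (Sum.inr v) b) (restrictC CU (insert (Sum.inr v) DU)) := by
  rintro c ⟨hc, hvars⟩
  by_contra hns
  rw [satClause] at hns
  push_neg at hns
  by_cases hvc : ∃ p : Bool, (Sum.inr v, p) ∈ c
  · -- c contains a literal of v
    -- it cannot contain (v, b), since that literal would be satisfied
    have hnotb : ¬ (Sum.inr v, b) ∈ c := by
      intro hmem
      exact hns _ hmem (by simp [satLit])
    obtain ⟨p, hp⟩ := hvc
    have hpb : p = !b := by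
      cases p <;> cases b <;> simp_all
    subst hpb
    -- c is in UC CU v DU
    have hUC : c ∈ UC CU v DU := by
      refine ⟨hc, ⟨!b, hp⟩, fun l hl hlne => ?_⟩
      rcases hvars l hl with h | h
      · exact absurd h hlne
      · exact h
    refine hnb ⟨c, hUC, hp, fun l hl hlne => ?_⟩
    have := hns l hl
    rwa [satLit_update σ v b l hlne] at this
  · -- c contains no literal of v, so all its variables lie in DU
    push_neg at hvc
    have hcD : c ∈ restrictC CU DU := by
      refine ⟨hc, fun l hl => ?_⟩
      rcases hvars l hl with h | h
      · exfalso
        obtain ⟨w, p⟩ := l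
        simp only at h
        subst h
        exact hvc p hl
      · exact h
    obtain ⟨l, hl, hsl⟩ := hsat c hcD
    have hlne : l.1 ≠ Sum.inr v := by
      intro h
      obtain ⟨w, p⟩ := l
      simp only at h
      subst h
      exact hvc p hl
    exact hns l hl ((satLit_update σ v b l hlne).2 hsl)

lemma inv_init {X Y : Type} (φ : Set (Clause X Y))
    (hφY : ∀ c ∈ φ, ∃ l ∈ c, ∃ y : Y, l.1 = Sum.inr y) :
    IDInv φ (initState φ) := by
  refine ⟨by simp [initState], by simp [initState, first], fun _ => trivial,
    fun _ => trivial, by simp [initState], fun xa => ?_⟩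
  refine ⟨combine xa (fun _ => true), rfl, ?_⟩
  rintro c ⟨hc, hvars⟩
  exfalso
  obtain ⟨l, hl, y, hy⟩ := hφY c (by
    simpa [initState, stackUnion_cons, stackUnion_nil] using hc)
  have := hvars l hl
  have hD : l.1 ∈ Set.range (Sum.inl : X → X ⊕ Y) := by
    simpa [initState, stackUnion_cons, stackUnion_nil] using this
  rw [hy] at hD
  simp at hD

lemma inv_step {X Y : Type} [DecidableEq X] [DecidableEq Y]
    (φ : Set (Clause X Y)) (hfalse : ¬ qbfTrue φ)
    {s t : IDState X Y} (ih : IDInv φ s) (hstep : Step s t) : IDInv φ t := by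
  obtain ⟨hCne, hφC, hχ, hα, hst, hP⟩ := ih
  cases hstep with
  | propagate C D χ α v hv hdet hunc =>
    refine ⟨hCne, hφC, hχ, hα, by simp, fun xa => ?_⟩
    obtain ⟨σ, hre, hsat⟩ := hP xa
    have hχα : χ (restrX σ) ∧ α (restrX σ) := ⟨hχ _, hα _⟩
    have hdet' := hdet σ hsat hχα
    -- pick the polarity b with ¬ Ant (!b)
    obtain ⟨b, hnb⟩ : ∃ b : Bool, ¬ Ant (stackUnion C) v (stackUnion D) (!b) σ := by
      rcases hdet' with h | h
      · exact ⟨true, fun hf => hunc σ hsat hχα ⟨h, by simpa using hf⟩⟩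
      · exact ⟨false, fun ht => hunc σ hsat hχα ⟨by simpa using ht, h⟩⟩
    refine ⟨Function.update σ (Sum.inr v) b, by rw [restrX_update, hre], ?_⟩
    have := propagate_key (stackUnion C) (stackUnion D) v b σ hv hsat hnb
    simpa [stackUnion_addLast] using this
  | decide C D χ α v δ hv hδfin hδ =>
    refine ⟨by simp, ?_, hχ, hα, by simp, fun xa => ?_⟩
    · rwa [first_append _ _ hCne]
    · obtain ⟨σ, hre, hsat⟩ := hP xa
      refine ⟨σ, hre, ?_⟩
      rintro c hc
      rw [stackUnion_append, stackUnion_append] at hc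
      obtain ⟨hcC, hvars⟩ := hc
      have hD' : stackUnion D ∪ stackUnion [∅] = stackUnion D := by
        simp [stackUnion_cons, stackUnion_nil]
      rw [hD'] at hvars
      rcases hcC with h | h
      · exact hsat c ⟨h, hvars⟩
      · exfalso
        have hcδ : c ∈ δ := by simpa [stackUnion_cons, stackUnion_nil] using h
        obtain ⟨⟨p, hp⟩, _⟩ := hδ c hcδ
        exact hv (hvars _ hp)
  | sat C D χ hD =>
    exfalso
    apply hfalse
    have hφU : φ ⊆ restrictC (stackUnion C) (stackUnion D) := by
      intro c hc
      refine ⟨first_subset_stackUnion C hCne (hφC hc), fun l _ => ?_⟩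
      rw [hD]; trivial
    choose g hg1 hg2 using hP
    refine ⟨fun xa => fun y => g xa (Sum.inr y), fun xa => ?_⟩
    have : combine xa (fun y => g xa (Sum.inr y)) = g xa := by
      funext w
      cases w with
      | inl x => exact (congrFun (hg1 xa) x).symm
      | inr y => rfl
    rw [this]
    exact satCnf_mono hφU (hg2 xa)
  | conflict C D χ α v σ hv hsat hχ' hα' ht hf =>
    exact ⟨hCne, hφC, hχ, hα, by simp, hP⟩
  | analyze C D χ α L σ c l hc hl hlc =>
    exact ⟨hCne, hφC, hχ, hα, by simp, hP⟩
  | learn C D χ α L σ h =>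
    refine ⟨by cases C <;> simp [addFirst], ?_, hχ, hα, by simp, fun xa => ?_⟩
    · rw [first_addFirst]
      exact hφC.trans (Set.subset_insert _ _)
    · obtain ⟨σ', hre, hsat⟩ := hP xa
      refine ⟨σ', hre, ?_⟩
      rintro c ⟨hc, hvars⟩
      rw [stackUnion_addFirst] at hc
      rcases hc with rfl | hmem
      · exfalso
        obtain ⟨l, hlL, hlD⟩ := h
        exact hlD (hvars l hlL)
      · exact hsat c ⟨hmem, hvars⟩
  | unsat C D χ α L σ hvars hfals =>
    exact ⟨hCne, hφC, hχ, hα, by simp, hP⟩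
  | backtrack S C D χ α k h0 hk =>
    refine ⟨?_, ?_, hχ, hα, hst, fun xa => ?_⟩
    · cases C with
      | nil => exact absurd rfl hCne
      | cons a l =>
        cases k with
        | zero => omega
        | succ n => simp [List.take_succ_cons]
    · rwa [first_take _ _ h0]
    · obtain ⟨σ, hre, hsat⟩ := hP xa
      exact ⟨σ, hre, satCnf_mono
        (restrictC_mono (stackUnion_take_subset C k) (stackUnion_take_subset D k)) hsat⟩

lemma inv_reachable {X Y : Type} [DecidableEq X] [DecidableEq Y]
    (φ : Set (Clause X Y))
    (hφY : ∀ c ∈ φ, ∃ l ∈ c, ∃ y : Y, l.1 = Sum.inr y)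
    (hfalse : ¬ qbfTrue φ) {s : IDState X Y} (h : Reachable φ s) : IDInv φ s := by
  induction h with
  | refl => exact inv_init φ hφY
  | tail _ hstep ih => exact inv_step φ hfalse ih hstep

/-- If Φ is false, no state with status SAT is reachable via basic ID. -/
theorem stmt_4 {X Y : Type} [Fintype X] [Fintype Y] [DecidableEq X] [DecidableEq Y]
    (φ : Set (Clause X Y)) (hφfin : φ.Finite)
    (hφY : ∀ c ∈ φ, ∃ l ∈ c, ∃ y : Y, l.1 = Sum.inr y)
    (hfalse : ¬ qbfTrue φ) :
    ¬ ∃ s : IDState X Y, Reachable φ s ∧ s.status = Status.sat := by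
  rintro ⟨s, hre, hsat⟩
  exact (inv_reachable φ hφY hfalse hre).2.2.2.2.1 hsat
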